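/- Let ξ^{(n)} be a sequence of graphs on n vertices and p_n ∈ (0,1] such that ‖ξ^{(n)}/p_n - 𝟏^{(n)}‖_{∞→1} = o(n²). Then there cannot exist two sequences of distinct connected components C₁^{(n)}, C₂^{(n)} of ξ^{(n)} each of size Θ(n): more precisely, if C₁ and C₂ are disjoint connected components of ξ^{(n)} with |C₁| = n₁ and |C₂| = n₂, then ‖ξ^{(n)}/p_n - 𝟏^{(n)}‖_{∞→1} ≥ n₁ n₂. -/

import Mathlib

/-- The ℓ_∞→ℓ_1 norm of a matrix: sup over ±1 sign vectors s, t of ∑ᵢⱼ Aᵢⱼ sᵢ tⱼ. -/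
noncomputable def linftyToL1Norm {n : ℕ} (A : Matrix (Fin n) (Fin n) ℝ) : ℝ :=
  sSup {x : ℝ | ∃ s t : Fin n → ℝ, (∀ i, s i = 1 ∨ s i = -1) ∧
    (∀ j, t j = 1 ∨ t j = -1) ∧ x = ∑ i, ∑ j, A i j * s i * t j}

/-- If C₁ and C₂ are disjoint connected components of the graph ξ (so ξᵢⱼ = 0 for
i ∈ C₁, j ∈ C₂) of sizes n₁ and n₂, then ‖ξ/p - 𝟏‖_{∞→1} ≥ n₁ n₂. -/
theorem no_two_giant_components (n : ℕ) (ξ : Matrix (Fin n) (Fin n) ℝ) (p : ℝ)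
    (hp : 0 < p) (hp1 : p ≤ 1) (hξ : ∀ i j, 0 ≤ ξ i j)
    (C₁ C₂ : Finset (Fin n)) (hdisj : Disjoint C₁ C₂)
    (hzero : ∀ i ∈ C₁, ∀ j ∈ C₂, ξ i j = 0) :
    (C₁.card : ℝ) * (C₂.card : ℝ) ≤ linftyToL1Norm (Matrix.of fun i j => ξ i j / p - 1) := by
  classical
  set A : Matrix (Fin n) (Fin n) ℝ := Matrix.of fun i j => ξ i j / p - 1 with hA
  set S : Set ℝ := {x : ℝ | ∃ s t : Fin n → ℝ, (∀ i, s i = 1 ∨ s i = -1) ∧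
    (∀ j, t j = 1 ∨ t j = -1) ∧ x = ∑ i, ∑ j, A i j * s i * t j} with hSdef
  have hnorm : linftyToL1Norm A = sSup S := rfl
  have hbdd : BddAbove S := by
    refine ⟨∑ i, ∑ j, |A i j|, ?_⟩
    rintro x ⟨s, t, hs, ht, rfl⟩
    calc ∑ i, ∑ j, A i j * s i * t j ≤ |∑ i, ∑ j, A i j * s i * t j| := le_abs_self _
      _ ≤ ∑ i, ∑ j, |A i j * s i * t j| := by
          refine (Finset.abs_sum_le_sum_abs _ _).trans ?_
          exact Finset.sum_le_sum fun i _ => Finset.abs_sum_le_sum_abs _ _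
      _ = ∑ i, ∑ j, |A i j| := by
          refine Finset.sum_congr rfl fun i _ => Finset.sum_congr rfl fun j _ => ?_
          rcases hs i with h1 | h1 <;> rcases ht j with h2 | h2 <;>
            simp [h1, h2, abs_mul]
  have hle : ∀ s t : Fin n → ℝ, (∀ i, s i = 1 ∨ s i = -1) → (∀ j, t j = 1 ∨ t j = -1) →
      (∑ i, ∑ j, A i j * s i * t j) ≤ sSup S := fun s t hs ht =>
    le_csSup hbdd ⟨s, t, hs, ht, rfl⟩
  set s : Fin n → ℝ := fun i => if i ∈ C₁ then 1 else -1 with hsdef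
  set t : Fin n → ℝ := fun j => if j ∈ C₂ then -1 else 1 with htdef
  have hs : ∀ i, s i = 1 ∨ s i = -1 := fun i => by by_cases h : i ∈ C₁ <;> simp [s, h]
  have ht : ∀ j, t j = 1 ∨ t j = -1 := fun j => by by_cases h : j ∈ C₂ <;> simp [t, h]
  have hone : ∀ i : Fin n, (fun _ : Fin n => (1:ℝ)) i = 1 ∨ (fun _ : Fin n => (1:ℝ)) i = -1 :=
    fun _ => Or.inl rfl
  have hneg : ∀ i : Fin n, (fun _ : Fin n => (-1:ℝ)) i = 1 ∨ (fun _ : Fin n => (-1:ℝ)) i = -1 :=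
    fun _ => Or.inr rfl
  have h1 := hle s t hs ht
  have h2 := hle s (fun _ => -1) hs hneg
  have h3 := hle (fun _ => 1) t hone ht
  have h4 := hle (fun _ => 1) (fun _ => -1) hone hneg
  have e1 : ∀ i j, A i j * s i * t j + A i j * s i * (-1) + A i j * 1 * t j + A i j * 1 * (-1)
      = if i ∈ C₁ then (if j ∈ C₂ then (4:ℝ) else 0) else 0 := by
    intro i j
    by_cases hi : i ∈ C₁ <;> by_cases hj : j ∈ C₂ <;>
        simp [hsdef, htdef, hi, hj, hA] <;> try ring_nf
    rw [hzero i hi j hj]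
    field_simp
    ring
  have key : (∑ i, ∑ j, A i j * s i * t j) + (∑ i, ∑ j, A i j * s i * (-1))
      + (∑ i, ∑ j, A i j * 1 * t j) + (∑ i, ∑ j, A i j * 1 * (-1))
      = 4 * ((C₁.card : ℝ) * (C₂.card : ℝ)) := by
    rw [← Finset.sum_add_distrib, ← Finset.sum_add_distrib, ← Finset.sum_add_distrib]
    simp only [← Finset.sum_add_distrib]
    rw [Finset.sum_congr rfl fun i _ => Finset.sum_congr rfl fun j _ => e1 i j]
    simp [Finset.sum_ite_mem, Finset.sum_const]
    ring
  rw [hnorm]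
  linarith
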